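/- For every λ > 0, the pair (Φ,Ψ) given by Φ(s) = 2⁵(s^{3/2} + 3λ^{-2}s)/(s^{1/2}+λ^{-2})³ and Ψ(s) = 8s/(s^{1/2}+λ^{-2}) satisfies, for all s > 0: 16 s^{3/2} Φ''(s) + 4 Φ'(s) Ψ(s) = 0 and 16 s^{3/2} Ψ''(s) + Φ(s) = 0. -/

import Mathlib

open Real

private lemma hd_half (s : ℝ) (hs : 0 < s) :
    HasDerivAt (fun x : ℝ => x ^ ((1:ℝ)/2)) ((1/2) * (s ^ ((1:ℝ)/2))⁻¹) s := by
  have h := Real.hasDerivAt_rpow_const (x := s) (p := (1:ℝ)/2) (Or.inl hs.ne')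
  convert h using 1
  rw [show (1:ℝ)/2 - 1 = -((1:ℝ)/2) by norm_num, Real.rpow_neg hs.le]

private lemma hd_threehalf (s : ℝ) (hs : 0 < s) :
    HasDerivAt (fun x : ℝ => x ^ ((3:ℝ)/2)) ((3/2) * s ^ ((1:ℝ)/2)) s := by
  have h := Real.hasDerivAt_rpow_const (x := s) (p := (3:ℝ)/2) (Or.inl hs.ne')
  convert h using 2
  norm_num

private lemma sq_half (s : ℝ) (hs : 0 < s) :
    s ^ ((1:ℝ)/2) * s ^ ((1:ℝ)/2) = s := by
  rw [← Real.rpow_add hs]; norm_num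

private lemma th_half (s : ℝ) (hs : 0 < s) :
    s ^ ((3:ℝ)/2) = s ^ ((1:ℝ)/2) * s := by
  rw [show (3:ℝ)/2 = 1/2 + 1 by norm_num, Real.rpow_add hs, Real.rpow_one]

private lemma hdPhi (a : ℝ) (ha : 0 < a) (s : ℝ) (hs : 0 < s) :
    HasDerivAt (fun x : ℝ => 2^5 * (x ^ ((3:ℝ)/2) + 3*a*x) / (x ^ ((1:ℝ)/2) + a)^3)
      (96 * a^2 / (s ^ ((1:ℝ)/2) + a)^4) s := by
  have hu : 0 < s ^ ((1:ℝ)/2) := Real.rpow_pos_of_pos hs _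
  have hua : 0 < s ^ ((1:ℝ)/2) + a := by linarith
  have hnum : HasDerivAt (fun x : ℝ => 2^5 * (x ^ ((3:ℝ)/2) + 3*a*x))
      (2^5 * ((3/2) * s ^ ((1:ℝ)/2) + 3*a)) s := by
    exact (((hd_threehalf s hs).add (((hasDerivAt_id s).const_mul (3*a)).congr_deriv
      (by ring))).const_mul (2^5))
  have hden : HasDerivAt (fun x : ℝ => (x ^ ((1:ℝ)/2) + a)^3)
      ((3:ℕ) * (s ^ ((1:ℝ)/2) + a)^2 * ((1/2) * (s ^ ((1:ℝ)/2))⁻¹)) s := by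
    have := ((hd_half s hs).add_const a).fun_pow 3
    simpa using this
  have hdiv := hnum.fun_div hden (by positivity)
  refine hdiv.congr_deriv (Eq.symm ?_)
  set u := s ^ ((1:ℝ)/2) with hudef
  have h32 : s ^ ((3:ℝ)/2) = u * s := th_half s hs
  have hs2 : s = u * u := (sq_half s hs).symm
  rw [h32]
  rw [hs2]
  field_simp
  ring
  
private lemma hdPhi' (a : ℝ) (ha : 0 < a) (s : ℝ) (hs : 0 < s) :
    HasDerivAt (fun x : ℝ => 96 * a^2 / (x ^ ((1:ℝ)/2) + a)^4)
      (-192 * a^2 / (s ^ ((1:ℝ)/2) * (s ^ ((1:ℝ)/2) + a)^5)) s := by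
  have hu : 0 < s ^ ((1:ℝ)/2) := Real.rpow_pos_of_pos hs _
  have hua : 0 < s ^ ((1:ℝ)/2) + a := by linarith
  have hden : HasDerivAt (fun x : ℝ => (x ^ ((1:ℝ)/2) + a)^4)
      ((4:ℕ) * (s ^ ((1:ℝ)/2) + a)^3 * ((1/2) * (s ^ ((1:ℝ)/2))⁻¹)) s := by
    have := ((hd_half s hs).add_const a).fun_pow 4
    simpa using this
  have hdiv := (hasDerivAt_const s (96 * a^2)).fun_div hden (by positivity)
  refine hdiv.congr_deriv (Eq.symm ?_)
  set u := s ^ ((1:ℝ)/2) with hudef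
  field_simp
  ring

private lemma hdPsi (a : ℝ) (ha : 0 < a) (s : ℝ) (hs : 0 < s) :
    HasDerivAt (fun x : ℝ => 8*x / (x ^ ((1:ℝ)/2) + a))
      ((4 * s ^ ((1:ℝ)/2) + 8*a) / (s ^ ((1:ℝ)/2) + a)^2) s := by
  have hu : 0 < s ^ ((1:ℝ)/2) := Real.rpow_pos_of_pos hs _
  have hua : 0 < s ^ ((1:ℝ)/2) + a := by linarith
  have hnum : HasDerivAt (fun x : ℝ => 8*x) (8:ℝ) s := by
    simpa using (hasDerivAt_id s).const_mul (8:ℝ)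
  have hden : HasDerivAt (fun x : ℝ => x ^ ((1:ℝ)/2) + a)
      ((1/2) * (s ^ ((1:ℝ)/2))⁻¹) s := (hd_half s hs).add_const a
  have hdiv := hnum.fun_div hden hua.ne'
  refine hdiv.congr_deriv (Eq.symm ?_)
  set u := s ^ ((1:ℝ)/2) with hudef
  have hs2 : s = u * u := (sq_half s hs).symm
  rw [hs2]
  field_simp
  ring

private lemma hdPsi' (a : ℝ) (ha : 0 < a) (s : ℝ) (hs : 0 < s) :
    HasDerivAt (fun x : ℝ => (4 * x ^ ((1:ℝ)/2) + 8*a) / (x ^ ((1:ℝ)/2) + a)^2)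
      (-(2 * s ^ ((1:ℝ)/2) + 6*a) / (s ^ ((1:ℝ)/2) * (s ^ ((1:ℝ)/2) + a)^3)) s := by
  have hu : 0 < s ^ ((1:ℝ)/2) := Real.rpow_pos_of_pos hs _
  have hua : 0 < s ^ ((1:ℝ)/2) + a := by linarith
  have hnum : HasDerivAt (fun x : ℝ => 4 * x ^ ((1:ℝ)/2) + 8*a)
      (4 * ((1/2) * (s ^ ((1:ℝ)/2))⁻¹)) s := ((hd_half s hs).const_mul 4).add_const _
  have hden : HasDerivAt (fun x : ℝ => (x ^ ((1:ℝ)/2) + a)^2)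
      ((2:ℕ) * (s ^ ((1:ℝ)/2) + a)^1 * ((1/2) * (s ^ ((1:ℝ)/2))⁻¹)) s :=
    ((hd_half s hs).add_const a).fun_pow 2
  have hdiv := hnum.fun_div hden (by positivity)
  refine hdiv.congr_deriv (Eq.symm ?_)
  set u := s ^ ((1:ℝ)/2) with hudef
  field_simp
  ring

theorem stmt_5 (lam : ℝ) (hlam : 0 < lam) :
    let Φ : ℝ → ℝ := fun s => 2^5 * (s ^ ((3:ℝ)/2) + 3*lam^(-(2:ℝ))*s) / (s ^ ((1:ℝ)/2) + lam^(-(2:ℝ)))^3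
    let Ψ : ℝ → ℝ := fun s => 8*s / (s ^ ((1:ℝ)/2) + lam^(-(2:ℝ)))
    ∀ s : ℝ, 0 < s →
      16 * s ^ ((3:ℝ)/2) * deriv (deriv Φ) s + 4 * deriv Φ s * Ψ s = 0 ∧
      16 * s ^ ((3:ℝ)/2) * deriv (deriv Ψ) s + Φ s = 0 := by
  intro Φ Ψ s hs
  set a : ℝ := lam ^ (-(2:ℝ)) with hadef
  have ha : 0 < a := Real.rpow_pos_of_pos hlam _
  have hu : 0 < s ^ ((1:ℝ)/2) := Real.rpow_pos_of_pos hs _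
  have hua : 0 < s ^ ((1:ℝ)/2) + a := by linarith
  have hΦ1 : ∀ x : ℝ, 0 < x → deriv Φ x = 96 * a^2 / (x ^ ((1:ℝ)/2) + a)^4 :=
    fun x hx => (hdPhi a ha x hx).deriv
  have hΨ1 : ∀ x : ℝ, 0 < x →
      deriv Ψ x = (4 * x ^ ((1:ℝ)/2) + 8*a) / (x ^ ((1:ℝ)/2) + a)^2 :=
    fun x hx => (hdPsi a ha x hx).deriv
  have hEΦ : deriv Φ =ᶠ[nhds s] (fun x => 96 * a^2 / (x ^ ((1:ℝ)/2) + a)^4) := by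
    filter_upwards [Ioi_mem_nhds hs] with x hx using hΦ1 x hx
  have hEΨ : deriv Ψ =ᶠ[nhds s]
      (fun x => (4 * x ^ ((1:ℝ)/2) + 8*a) / (x ^ ((1:ℝ)/2) + a)^2) := by
    filter_upwards [Ioi_mem_nhds hs] with x hx using hΨ1 x hx
  have hΦ2 : deriv (deriv Φ) s = -192 * a^2 / (s ^ ((1:ℝ)/2) * (s ^ ((1:ℝ)/2) + a)^5) := by
    rw [hEΦ.deriv_eq]; exact (hdPhi' a ha s hs).deriv
  have hΨ2 : deriv (deriv Ψ) s = -(2 * s ^ ((1:ℝ)/2) + 6*a) / (s ^ ((1:ℝ)/2) * (s ^ ((1:ℝ)/2) + a)^3) := by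
    rw [hEΨ.deriv_eq]; exact (hdPsi' a ha s hs).deriv
  have h32 : s ^ ((3:ℝ)/2) = s ^ ((1:ℝ)/2) * s := th_half s hs
  have hs2 : s = s ^ ((1:ℝ)/2) * s ^ ((1:ℝ)/2) := (sq_half s hs).symm
  constructor
  · rw [hΦ2, hΦ1 s hs, h32]
    show 16 * (s ^ ((1:ℝ)/2) * s) * (-192 * a^2 / (s ^ ((1:ℝ)/2) * (s ^ ((1:ℝ)/2) + a)^5))
      + 4 * (96 * a^2 / (s ^ ((1:ℝ)/2) + a)^4) * (8*s / (s ^ ((1:ℝ)/2) + a)) = 0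
    set u := s ^ ((1:ℝ)/2) with hudef
    rw [hs2]
    field_simp
    ring
  · rw [hΨ2, h32]
    show 16 * (s ^ ((1:ℝ)/2) * s) * (-(2 * s ^ ((1:ℝ)/2) + 6*a) / (s ^ ((1:ℝ)/2) * (s ^ ((1:ℝ)/2) + a)^3))
      + 2^5 * (s ^ ((3:ℝ)/2) + 3*a*s) / (s ^ ((1:ℝ)/2) + a)^3 = 0
    rw [h32]
    set u := s ^ ((1:ℝ)/2) with hudef
    rw [hs2]
    field_simp
    ring
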